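/- arXiv:0710.3801 — 3 statements merged into one kernel-verified Lean document; each statement's English description precedes it below -/
import Mathlib

section
/- Let T(x) be a formal power series in x ∈ ℝ^N. If for every vector v ∈ ℝ^N the power series t ↦ T(tv) in the single real variable t is convergent (has positive radius of convergence), then T itself is convergent (has positive radius of convergence as a multivariate power series). -/
open scoped BigOperators

noncomputable section

/-- A formal power series in one real variable is convergent (has positive radius of
convergence) iff its coefficients satisfy a bound `|a_n| r^n ≤ C` for some `r > 0`. -/
def PowerSeriesConvergent (f : PowerSeries ℝ) : Prop :=
  ∃ r C : ℝ, 0 < r ∧ ∀ n : ℕ, |PowerSeries.coeff n f| * r ^ n ≤ C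

/-- A formal power series in `N` real variables is convergent (has positive radius of
convergence) iff its coefficients satisfy `|a_d| r^{|d|} ≤ C` for some `r > 0`. -/
def MvPowerSeriesConvergent {N : ℕ} (T : MvPowerSeries (Fin N) ℝ) : Prop :=
  ∃ r C : ℝ, 0 < r ∧ ∀ d : Fin N →₀ ℕ,
    |MvPowerSeries.coeff d T| * r ^ (d.sum fun _ k => k) ≤ C

/-- The restriction of the formal power series `T` to the line `t ↦ t • v`: the formal
power series in one variable `t` whose `n`-th coefficient collects all the degree `n`
monomials of `T` evaluated at `v`. -/
def lineSeries {N : ℕ} (T : MvPowerSeries (Fin N) ℝ) (v : Fin N → ℝ) : PowerSeries ℝ :=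
  PowerSeries.mk fun n =>
    ∑' d : {d : Fin N →₀ ℕ // (d.sum fun _ k => k) = n},
      MvPowerSeries.coeff d.1 T * ∏ i, v i ^ d.1 i

section Aux

open Polynomial Finset fwdDiff

lemma fwdDiff_polyEval (h : ℝ) (p : ℝ[X]) :
    Δ_[h] (fun x => p.eval x) = fun x => (taylor h p - p).eval x := by
  ext x
  simp [fwdDiff, taylor_apply, eval_comp, add_comm]

lemma natDegree_taylor_sub_le (h : ℝ) (p : ℝ[X]) (m : ℕ) (hp : p.natDegree ≤ m + 1) :
    (taylor h p - p).natDegree ≤ m := by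
  rw [natDegree_le_iff_coeff_eq_zero]
  intro j hj
  have hdeg : p.natDegree ≤ j := le_trans hp hj
  rw [coeff_sub, taylor_coeff]
  have h0 : (Polynomial.hasseDeriv j p).natDegree ≤ 0 := by
    have := Polynomial.natDegree_hasseDeriv_le p j
    omega
  have := Polynomial.eq_C_of_natDegree_le_zero h0
  rw [this, eval_C, Polynomial.hasseDeriv_coeff, Nat.zero_add, Nat.choose_self]
  simp

lemma coeff_taylor_sub (h : ℝ) (p : ℝ[X]) (m : ℕ) (hp : p.natDegree ≤ m + 1) :
    (taylor h p - p).coeff m = (m+1) * h * p.coeff (m+1) := by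
  rw [coeff_sub, taylor_coeff]
  have h1 : (Polynomial.hasseDeriv m p).natDegree < 2 := by
    have := Polynomial.natDegree_hasseDeriv_le p m
    omega
  rw [Polynomial.eval_eq_sum_range' h1]
  simp only [Polynomial.hasseDeriv_coeff]
  rw [Finset.sum_range_succ, Finset.sum_range_one, add_comm 1 m,
    Nat.choose_succ_self_right]
  simp only [Nat.zero_add, Nat.choose_self]
  push_cast
  ring

lemma fwdDiff_iter_poly (h : ℝ) : ∀ (m : ℕ) (p : ℝ[X]), p.natDegree ≤ m →
    (Δ_[h])^[m] (fun x => p.eval x) = fun _ => m.factorial * h ^ m * p.coeff m := by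
  intro m
  induction m with
  | zero =>
    intro p hp
    ext x
    rw [Polynomial.eq_C_of_natDegree_le_zero hp]
    simp
  | succ m ih =>
    intro p hp
    rw [Function.iterate_succ_apply, fwdDiff_polyEval,
      ih _ (natDegree_taylor_sub_le h p m hp), coeff_taylor_sub h p m hp]
    ext x
    rw [Nat.factorial_succ]
    push_cast
    ring

lemma oneD (h a : ℝ) (m k : ℕ) (hk : k ≤ m) :
    ∑ s ∈ Finset.range (m+1), (-1:ℝ)^(m-s) * (m.choose s) * (a + h * s)^k
      = if k = m then m.factorial * h^m else 0 := by
  have key := fwdDiff_iter_eq_sum_shift h (fun x : ℝ => x ^ k) m a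
  have hdeg : (X ^ k : ℝ[X]).natDegree ≤ m := by
    simpa [Polynomial.natDegree_X_pow] using hk
  have hpoly : (Δ_[h])^[m] (fun x : ℝ => x ^ k) = fun _ => m.factorial * h ^ m * (X ^ k : ℝ[X]).coeff m := by
    have := fwdDiff_iter_poly h m (X ^ k) hdeg
    simpa using this
  rw [hpoly] at key
  have h2 : ∑ s ∈ Finset.range (m+1), (-1:ℝ)^(m-s) * (m.choose s) * (a + h * s)^k
      = ∑ s ∈ Finset.range (m+1), (((-1 : ℤ) ^ (m - s) * (m.choose s) : ℤ) • (a + s • h) ^ k) := by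
    refine Finset.sum_congr rfl fun s _ => ?_
    push_cast [zsmul_eq_mul, nsmul_eq_mul]
    ring
  rw [h2, ← key, Polynomial.coeff_X_pow]
  by_cases hkm : k = m
  · subst hkm; simp
  · simp [hkm, Ne.symm hkm]

variable {N : ℕ}

lemma finsupp_sum_eq (e : Fin N →₀ ℕ) : (e.sum fun _ k => k) = ∑ j, e j :=
  Finsupp.sum_fintype _ _ (fun _ => rfl)

def degFinset (N n : ℕ) : Finset (Fin N →₀ ℕ) :=
  ((Fintype.piFinset fun _ : Fin N => Finset.range (n+1)).filter
    (fun f => ∑ j, f j = n)).image Finsupp.equivFunOnFinite.symm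

lemma mem_degFinset {n : ℕ} {e : Fin N →₀ ℕ} :
    e ∈ degFinset N n ↔ (e.sum fun _ k => k) = n := by
  rw [finsupp_sum_eq, degFinset, Finset.mem_image]
  constructor
  · rintro ⟨f, hf, rfl⟩
    rw [Finset.mem_filter] at hf
    exact hf.2
  · intro he
    refine ⟨⇑e, ?_, by simp⟩
    rw [Finset.mem_filter]
    refine ⟨Fintype.mem_piFinset.2 fun j => ?_, he⟩
    rw [Finset.mem_range, Nat.lt_succ_iff, ← he]
    exact Finset.single_le_sum (f := fun j => e j) (fun _ _ => Nat.zero_le _) (Finset.mem_univ j)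

def Fn (T : MvPowerSeries (Fin N) ℝ) (n : ℕ) (v : Fin N → ℝ) : ℝ :=
  ∑ e ∈ degFinset N n, MvPowerSeries.coeff e T * ∏ j, v j ^ e j

lemma lineSeries_coeff (T : MvPowerSeries (Fin N) ℝ) (v : Fin N → ℝ) (n : ℕ) :
    PowerSeries.coeff n (lineSeries T v) = Fn T n v := by
  rw [lineSeries, PowerSeries.coeff_mk]
  haveI : Fintype {d : Fin N →₀ ℕ // (d.sum fun _ k => k) = n} :=
    Fintype.subtype (degFinset N n) (fun _ => mem_degFinset)
  rw [tsum_fintype, Fn]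
  exact (Finset.sum_subtype (degFinset N n) (fun _ => mem_degFinset)
    (fun d => MvPowerSeries.coeff d T * ∏ i, v i ^ d i)).symm

lemma continuous_Fn (T : MvPowerSeries (Fin N) ℝ) (n : ℕ) : Continuous (Fn T n) := by
  refine continuous_finset_sum _ fun e _ => ?_
  exact continuous_const.mul (continuous_finset_prod _ fun j _ => (continuous_apply j).pow _)

lemma grid_identity (T : MvPowerSeries (Fin N) ℝ) (d : Fin N →₀ ℕ) (v0 : Fin N → ℝ) (h : ℝ) :
    ∑ s ∈ Fintype.piFinset (fun j : Fin N => Finset.range (d j + 1)),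
        (∏ j, (-1:ℝ)^(d j - s j) * ((d j).choose (s j))) *
          Fn T (d.sum fun _ k => k) (fun j => v0 j + h * s j)
      = (∏ j, ((d j).factorial : ℝ)) * h ^ (d.sum fun _ k => k) *
          MvPowerSeries.coeff d T := by
  set n := d.sum fun _ k => k with hn
  have hdn : ∑ j, d j = n := (finsupp_sum_eq d).symm
  have step1 : ∀ s : Fin N → ℕ,
      (∏ j, (-1:ℝ)^(d j - s j) * ((d j).choose (s j))) * Fn T n (fun j => v0 j + h * s j)
      = ∑ e ∈ degFinset N n, MvPowerSeries.coeff e T *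
          ∏ j, ((-1:ℝ)^(d j - s j) * ((d j).choose (s j)) * (v0 j + h * s j) ^ e j) := by
    intro s
    rw [Fn, Finset.mul_sum]
    refine Finset.sum_congr rfl fun e _ => ?_
    simp only [Finset.prod_mul_distrib]
    ring
  simp_rw [step1]
  rw [Finset.sum_comm]
  have step2 : ∀ e ∈ degFinset N n,
      (∑ s ∈ Fintype.piFinset (fun j : Fin N => Finset.range (d j + 1)),
        MvPowerSeries.coeff e T *
          ∏ j, ((-1:ℝ)^(d j - s j) * ((d j).choose (s j)) * (v0 j + h * s j) ^ e j))
      = MvPowerSeries.coeff e T * ∏ j, ∑ t ∈ Finset.range (d j + 1),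
          ((-1:ℝ)^(d j - t) * ((d j).choose t) * (v0 j + h * t) ^ e j) := by
    intro e _
    rw [← Finset.mul_sum]
    congr 1
    exact (Finset.prod_univ_sum (fun j : Fin N => Finset.range (d j + 1))
      (fun j t => (-1:ℝ)^(d j - t) * ((d j).choose t) * (v0 j + h * t) ^ e j)).symm
  rw [Finset.sum_congr rfl step2]
  have hd : d ∈ degFinset N n := mem_degFinset.2 rfl
  rw [Finset.sum_eq_single_of_mem d hd ?side]
  case side =>
    intro e he hne
    have hesum : ∑ j, e j = n := by rw [← finsupp_sum_eq]; exact mem_degFinset.1 he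
    have hex : ∃ j, e j < d j := by
      by_contra hcon
      push_neg at hcon
      have hsum : ∑ j, d j = ∑ j, e j := hdn.trans hesum.symm
      have := (Finset.sum_eq_sum_iff_of_le fun j _ => hcon j).1 hsum
      exact hne (Finsupp.ext fun j => (this j (Finset.mem_univ j)).symm)
    obtain ⟨j0, hj0⟩ := hex
    apply mul_eq_zero_of_right
    apply Finset.prod_eq_zero (Finset.mem_univ j0)
    rw [oneD h (v0 j0) (d j0) (e j0) hj0.le, if_neg (Nat.ne_of_lt hj0)]
  · have hfac : ∀ j, (∑ t ∈ Finset.range (d j + 1),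
        ((-1:ℝ)^(d j - t) * ((d j).choose t) * (v0 j + h * t) ^ d j))
        = ((d j).factorial : ℝ) * h ^ (d j) := by
      intro j
      rw [oneD h (v0 j) (d j) (d j) le_rfl, if_pos rfl]
    rw [Finset.prod_congr rfl (fun j _ => hfac j), Finset.prod_mul_distrib,
      Finset.prod_pow_eq_pow_sum, hdn]
    ring

lemma pow_le_fact_exp (x : ℝ) (hx : 0 ≤ x) (m : ℕ) :
    x ^ m ≤ (m.factorial : ℝ) * Real.exp x := by
  have h1 : x ^ m / m.factorial ≤ Real.exp x := by
    calc x ^ m / m.factorial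
        ≤ ∑ i ∈ Finset.range (m+1), x ^ i / i.factorial :=
          Finset.single_le_sum (f := fun i => x ^ i / (i.factorial : ℝ))
            (fun i _ => by positivity) (Finset.self_mem_range_succ m)
      _ ≤ Real.exp x := Real.sum_le_exp_of_nonneg hx _
  rw [div_le_iff₀ (by positivity)] at h1
  linarith


/-- If a formal power series `T` in `x ∈ ℝ^N` is such that `t ↦ T (t v)` is a convergent
power series in `t` for every `v ∈ ℝ^N`, then `T` is convergent. -/
theorem convergence_on_lines {N : ℕ} (T : MvPowerSeries (Fin N) ℝ)
    (h : ∀ v : Fin N → ℝ, PowerSeriesConvergent (lineSeries T v)) :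
    MvPowerSeriesConvergent T := by
  classical
  -- the closed sets for the Baire argument
  let E : ℕ × ℕ → Set (Fin N → ℝ) := fun p =>
    {v | ∀ n : ℕ, |Fn T n v| * (1/((p.1 : ℝ)+1)) ^ n ≤ (p.2 : ℝ)}
  have hclosed : ∀ p, IsClosed (E p) := by
    intro p
    have hE : E p = ⋂ n : ℕ, {v | |Fn T n v| * (1/((p.1 : ℝ)+1)) ^ n ≤ (p.2 : ℝ)} := by
      ext v; simp [E, Set.mem_iInter]
    rw [hE]
    exact isClosed_iInter fun n =>
      isClosed_le (((continuous_Fn T n).abs).mul continuous_const) continuous_const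
  have hcover : (⋃ p, E p) = Set.univ := by
    ext v
    simp only [Set.mem_iUnion, Set.mem_univ, iff_true]
    obtain ⟨r, C, hr, hC⟩ := h v
    obtain ⟨m, hm⟩ := exists_nat_gt (1/r)
    obtain ⟨k, hk⟩ := exists_nat_gt C
    refine ⟨(m, k), fun n => ?_⟩
    have h1 : (1/((m : ℝ)+1)) ≤ r := by
      rw [div_le_iff₀ (by positivity)]
      rw [div_lt_iff₀ hr] at hm
      nlinarith
    calc |Fn T n v| * (1/((m : ℝ)+1)) ^ n
        ≤ |Fn T n v| * r ^ n := by
          apply mul_le_mul_of_nonneg_left (pow_le_pow_left₀ (by positivity) h1 n) (abs_nonneg _)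
      _ = |PowerSeries.coeff n (lineSeries T v)| * r ^ n := by rw [lineSeries_coeff]
      _ ≤ C := hC n
      _ ≤ k := hk.le
  obtain ⟨p, v0, hv0⟩ := nonempty_interior_of_iUnion_of_closed hclosed hcover
  obtain ⟨ε, hε, hball⟩ := Metric.isOpen_iff.1 isOpen_interior v0 hv0
  have hEball : Metric.ball v0 ε ⊆ E p := hball.trans interior_subset
  set ρ : ℝ := (p.1 : ℝ) + 1 with hρdef
  have hρ : (0:ℝ) < ρ := by positivity
  set k : ℝ := (p.2 : ℝ) with hkdef
  have hk0 : (0:ℝ) ≤ k := Nat.cast_nonneg _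
  have hbound : ∀ w ∈ Metric.ball v0 ε, ∀ n : ℕ, |Fn T n w| ≤ k * ρ ^ n := by
    intro w hw n
    have h2 := hEball hw n
    have h3 : (0:ℝ) < (1/ρ) ^ n := by positivity
    calc |Fn T n w| = |Fn T n w| * (1/ρ) ^ n * ρ ^ n := by
          rw [mul_assoc, ← mul_pow, one_div_mul_cancel hρ.ne', one_pow, mul_one]
      _ ≤ k * ρ ^ n := by
          apply mul_le_mul_of_nonneg_right h2 (by positivity)
  have hexp1 : (1:ℝ) ≤ Real.exp N := Real.one_le_exp (by positivity)
  have hexppos : (0:ℝ) < Real.exp N := Real.exp_pos _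
  refine ⟨ε / (4 * ρ * Real.exp N), k * Real.exp N, by positivity, ?_⟩
  intro d
  set n := d.sum fun _ k => k with hn
  have hdn : ∑ j, d j = n := (finsupp_sum_eq d).symm
  have hdj : ∀ j, d j ≤ n := fun j => hdn ▸
    Finset.single_le_sum (f := fun j => d j) (fun _ _ => Nat.zero_le _) (Finset.mem_univ j)
  set hstep : ℝ := ε / (2*((n:ℝ)+1)) with hstepdef
  have hsteppos : 0 < hstep := by positivity
  set D : ℝ := ∏ j, ((d j).factorial : ℝ) with hDdef
  have hDpos : 0 < D := Finset.prod_pos fun j _ => by positivity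
  -- grid points lie in the ball
  have hgrid : ∀ s ∈ Fintype.piFinset (fun j : Fin N => Finset.range (d j + 1)),
      (fun j => v0 j + hstep * (s j : ℝ)) ∈ Metric.ball v0 ε := by
    intro s hs
    rw [Metric.mem_ball, dist_pi_lt_iff hε]
    intro j
    have hsj : (s j : ℝ) ≤ (n : ℝ) := by
      have := Finset.mem_range.1 (Fintype.mem_piFinset.1 hs j)
      exact_mod_cast le_trans (Nat.lt_succ_iff.1 this) (hdj j)
    have : dist (v0 j + hstep * (s j : ℝ)) (v0 j) = hstep * (s j : ℝ) := by
      rw [Real.dist_eq, show v0 j + hstep * (s j:ℝ) - v0 j = hstep * (s j:ℝ) by ring]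
      exact abs_of_nonneg (by positivity)
    rw [this]
    calc hstep * (s j : ℝ) ≤ hstep * ((n:ℝ)+1) := by
          apply mul_le_mul_of_nonneg_left (by linarith) hsteppos.le
      _ = ε/2 := by rw [hstepdef]; field_simp
      _ < ε := by linarith
  -- the key coefficient bound from the grid identity
  have hid := grid_identity T d v0 hstep
  rw [← hn, ← hDdef] at hid
  have key : D * hstep ^ n * |MvPowerSeries.coeff d T| ≤ 2 ^ n * k * ρ ^ n := by
    have habs : D * hstep ^ n * |MvPowerSeries.coeff d T|
        = |D * hstep ^ n * MvPowerSeries.coeff d T| := by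
      rw [abs_mul, abs_of_nonneg (show (0:ℝ) ≤ D * hstep ^ n by positivity)]
    rw [habs, ← hid]
    calc |∑ s ∈ Fintype.piFinset (fun j : Fin N => Finset.range (d j + 1)),
          (∏ j, (-1:ℝ)^(d j - s j) * ((d j).choose (s j))) *
            Fn T n (fun j => v0 j + hstep * (s j : ℝ))|
        ≤ ∑ s ∈ Fintype.piFinset (fun j : Fin N => Finset.range (d j + 1)),
          |(∏ j, (-1:ℝ)^(d j - s j) * ((d j).choose (s j))) *
            Fn T n (fun j => v0 j + hstep * (s j : ℝ))| :=
          Finset.abs_sum_le_sum_abs _ _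
      _ ≤ ∑ s ∈ Fintype.piFinset (fun j : Fin N => Finset.range (d j + 1)),
          (∏ j, (((d j).choose (s j) : ℝ))) * (k * ρ ^ n) := by
          refine Finset.sum_le_sum fun s hs => ?_
          rw [abs_mul]
          have habs2 : |∏ j, (-1:ℝ)^(d j - s j) * ((d j).choose (s j))|
              = ∏ j, (((d j).choose (s j) : ℝ)) := by
            rw [Finset.abs_prod]
            refine Finset.prod_congr rfl fun j _ => ?_
            rw [abs_mul, abs_pow, abs_neg, abs_one, one_pow, one_mul, Nat.abs_cast]
          rw [habs2]
          apply mul_le_mul_of_nonneg_left (hbound _ (hgrid s hs) n)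
          positivity
      _ = (∑ s ∈ Fintype.piFinset (fun j : Fin N => Finset.range (d j + 1)),
          (∏ j, (((d j).choose (s j) : ℝ)))) * (k * ρ ^ n) := (Finset.sum_mul _ _ _).symm
      _ = 2 ^ n * (k * ρ ^ n) := by
          congr 1
          rw [← Finset.prod_univ_sum (fun j : Fin N => Finset.range (d j + 1))
            (fun j t => (((d j).choose t : ℝ)))]
          have : ∀ j : Fin N, (∑ t ∈ Finset.range (d j + 1), (((d j).choose t : ℝ)))
              = 2 ^ (d j) := by
            intro j
            rw [← Nat.cast_sum, Nat.sum_range_choose]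
            push_cast; ring
          rw [Finset.prod_congr rfl fun j _ => this j, Finset.prod_pow_eq_pow_sum, hdn]
      _ = 2 ^ n * k * ρ ^ n := by ring
  -- central combinatorial inequality
  have central : ((n:ℝ)+1) ^ n ≤ D * Real.exp N ^ (n+1) := by
    calc ((n:ℝ)+1) ^ n = ∏ j : Fin N, ((n:ℝ)+1) ^ (d j) := by
          rw [Finset.prod_pow_eq_pow_sum, hdn]
      _ ≤ ∏ j : Fin N, (((d j).factorial : ℝ) * Real.exp ((n:ℝ)+1)) := by
          refine Finset.prod_le_prod (fun j _ => by positivity) fun j _ => ?_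
          exact pow_le_fact_exp _ (by positivity) _
      _ = D * Real.exp ((n:ℝ)+1) ^ (N:ℕ) := by
          rw [Finset.prod_mul_distrib, Finset.prod_const, Finset.card_univ, Fintype.card_fin]
      _ = D * Real.exp N ^ (n+1) := by
          rw [← Real.exp_nat_mul, ← Real.exp_nat_mul]
          congr 2
          push_cast; ring
  -- finish
  have hmulpos : (0:ℝ) < D * hstep ^ n := by positivity
  rw [← mul_le_mul_iff_of_pos_right hmulpos]
  calc |MvPowerSeries.coeff d T| * (ε / (4 * ρ * Real.exp N)) ^ n * (D * hstep ^ n)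
      = (D * hstep ^ n * |MvPowerSeries.coeff d T|) * (ε / (4 * ρ * Real.exp N)) ^ n := by ring
    _ ≤ (2 ^ n * k * ρ ^ n) * (ε / (4 * ρ * Real.exp N)) ^ n :=
        mul_le_mul_of_nonneg_right key (by positivity)
    _ ≤ k * Real.exp N * (D * hstep ^ n) := by
        rw [div_pow, div_pow]
        rw [show (2:ℝ)^n * k * ρ^n * (ε^n / (4*ρ*Real.exp N)^n)
              = (2^n * k * ρ^n * ε^n) / (4*ρ*Real.exp N)^n by ring,
          show k * Real.exp N * (D * (ε^n / (2*((n:ℝ)+1))^n))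
              = (k * Real.exp N * (D * ε^n)) / (2*((n:ℝ)+1))^n by ring,
          div_le_div_iff₀ (by positivity) (by positivity)]
        have expand : (2:ℝ)^n * k * ρ^n * ε^n * (2*((n:ℝ)+1))^n
            = (2^n * 2^n * k * ρ^n * ε^n) * ((n:ℝ)+1)^n := by
          rw [mul_pow]; ring
        have expand2 : k * Real.exp N * (D * ε^n) * (4 * ρ * Real.exp N)^n
            = (2^n * 2^n * k * ρ^n * ε^n) * (D * Real.exp N ^ (n+1)) := by
          rw [mul_pow, mul_pow]
          rw [show (4:ℝ)^n = 2^n * 2^n by rw [← mul_pow]; norm_num]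
          rw [pow_succ]
          ring
        rw [expand, expand2]
        apply mul_le_mul_of_nonneg_left central (by positivity)


end Aux

end
end

section
/- Let X be a Stein manifold, and let K ⊂ X be a compact subset that is 𝒪(X)-convex (i.e., K equals its holomorphically convex hull with respect to global holomorphic functions on X). Then K = ∩_{k=1}^∞ U_k for a decreasing sequence of open Stein submanifolds U_k of X. -/
open Set Topology Manifold

noncomputable section

variable (N : ℕ) (X : Type) [TopologicalSpace X] [ChartedSpace (Fin N → ℂ) X]

/-- `f : X → ℂ` is holomorphic on the open set `U ⊆ X`. -/
def HolomorphicOnSet (U : Set X) (f : X → ℂ) : Prop :=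
  ∀ x ∈ U, MDifferentiableAt 𝓘(ℂ, Fin N → ℂ) 𝓘(ℂ, ℂ) f x

/-- The hull of `S` in `U` with respect to functions holomorphic on `U`. -/
def holHullIn (U S : Set X) : Set X :=
  {x ∈ U | ∀ f : X → ℂ, HolomorphicOnSet N X U f →
    ‖f x‖ ≤ sSup ((fun y => ‖f y‖) '' S)}

/-- The open set `U ⊆ X` is a Stein open submanifold: it is holomorphically convex,
holomorphically separable, and global holomorphic functions on `U` give local
coordinates at each point. -/
def IsSteinOpen (U : Set X) : Prop :=
  IsOpen U ∧
  (∀ K ⊆ U, IsCompact K → IsCompact (holHullIn N X U K)) ∧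
  (∀ x ∈ U, ∀ y ∈ U, x ≠ y → ∃ f, HolomorphicOnSet N X U f ∧ f x ≠ f y) ∧
  (∀ x ∈ U, ∃ f : X → Fin N → ℂ, (∀ i, HolomorphicOnSet N X U (fun y => f y i)) ∧
    ∃ W ∈ nhds x, W ⊆ U ∧ InjOn f W)

/-- The image of `A ⊆ X` in the chart at `p`. -/
def chartIm (A : Set X) (p : X) : Set (Fin N → ℂ) :=
  (chartAt (Fin N → ℂ) p) '' (A ∩ (chartAt (Fin N → ℂ) p).source)

/-- The image of the point `p` in the chart at `p`. -/
def chartPt (p : X) : Fin N → ℂ := chartAt (Fin N → ℂ) p p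


lemma holo_mono {U : Set X} {f : X → ℂ} (h : HolomorphicOnSet N X univ f) :
    HolomorphicOnSet N X U f := fun x _ => h x (mem_univ x)

lemma holo_continuous {f : X → ℂ} (h : HolomorphicOnSet N X univ f) : Continuous f :=
  continuous_iff_continuousAt.2 fun x => (h x (mem_univ x)).continuousAt

lemma mem_holHullIn {U S : Set X} {x : X} :
    x ∈ holHullIn N X U S ↔ x ∈ U ∧ ∀ f : X → ℂ, HolomorphicOnSet N X U f →
      ‖f x‖ ≤ sSup ((fun y => ‖f y‖) '' S) := Iff.rfl

lemma isSteinOpen_polyhedron [T2Space X] (hStein : IsSteinOpen N X univ)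
    {M O : Set X} (hM : IsCompact M) (hO : IsOpen O) (hOM : O ⊆ M)
    {G : Set (X → ℂ)} (hGfin : G.Finite) (hGhol : ∀ g ∈ G, HolomorphicOnSet N X univ g)
    (hcov : ∀ x ∈ M \ O, ∃ g ∈ G, 1 < ‖g x‖) :
    IsSteinOpen N X {x ∈ M | ∀ g ∈ G, ‖g x‖ < 1} := by
  set U : Set X := {x ∈ M | ∀ g ∈ G, ‖g x‖ < 1} with hU_def
  have hcont : ∀ g ∈ G, Continuous fun y => ‖g y‖ :=
    fun g hg => (holo_continuous N X (hGhol g hg)).norm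
  have hU_eq : U = O ∩ {x | ∀ g ∈ G, ‖g x‖ < 1} := by
    ext x
    constructor
    · rintro ⟨hxM, hxg⟩
      refine ⟨?_, hxg⟩
      by_contra hxO
      obtain ⟨g, hg, h1⟩ := hcov x ⟨hxM, hxO⟩
      exact absurd (hxg g hg) (not_lt.2 h1.le)
    · rintro ⟨hxO, hxg⟩
      exact ⟨hOM hxO, hxg⟩
  have hUopen : IsOpen U := by
    rw [hU_eq]
    have h2 : {x : X | ∀ g ∈ G, ‖g x‖ < 1} = ⋂ g ∈ G, {x | ‖g x‖ < 1} := by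
      ext x; simp
    rw [h2]
    exact hO.inter (hGfin.isOpen_biInter fun g hg =>
      isOpen_lt (hcont g hg) continuous_const)
  refine ⟨hUopen, ?_, ?_, ?_⟩
  · -- convexity
    intro L hLU hL
    have hbdd : ∀ g ∈ G, BddAbove ((fun y => ‖g y‖) '' L) :=
      fun g hg => (hL.image (hcont g hg)).bddAbove
    have hbound : ∀ g ∈ G, ∀ x ∈ L, ‖g x‖ ≤ sSup ((fun y => ‖g y‖) '' L) :=
      fun g hg x hx => le_csSup (hbdd g hg) ⟨x, hx, rfl⟩
    have ht1 : ∀ g ∈ G, sSup ((fun y => ‖g y‖) '' L) < 1 := by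
      intro g hg
      rcases L.eq_empty_or_nonempty with h | h
      · simp [h, Real.sSup_empty]
      · obtain ⟨x, hxL, hxe⟩ := (hL.image (hcont g hg)).sSup_mem (h.image _)
        rw [← hxe]
        exact (hLU hxL).2 g hg
    set C := holHullIn N X univ L ∩
      (M ∩ ⋂ g ∈ G, {x | ‖g x‖ ≤ sSup ((fun y => ‖g y‖) '' L)}) with hC_def
    have hCcompact : IsCompact C :=
      (hStein.2.1 L (subset_univ L) hL).inter_right
        (hM.isClosed.inter (isClosed_biInter fun g hg =>
          isClosed_le (hcont g hg) continuous_const))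
    have hCU : C ⊆ U := by
      rintro x ⟨_, hxM, hxg⟩
      exact ⟨hxM, fun g hg => lt_of_le_of_lt (mem_iInter₂.1 hxg g hg) (ht1 g hg)⟩
    have hHullC : holHullIn N X U L ⊆ C := by
      rintro x ⟨hxU, hx⟩
      refine ⟨⟨mem_univ x, fun f hf => hx f (holo_mono N X hf)⟩, hxU.1, ?_⟩
      exact mem_iInter₂.2 fun g hg => hx g (fun y hy => hGhol g hg y (mem_univ y))
    have hHullClosed : IsClosed (holHullIn N X U L) := by
      apply isClosed_of_closure_subset
      intro x hx
      have hxC : x ∈ C := hCcompact.isClosed.closure_subset_iff.2 hHullC hx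
      have hxU : x ∈ U := hCU hxC
      refine (mem_holHullIn N X).2 ⟨hxU, fun f hf => ?_⟩
      haveI hne : (𝓝[holHullIn N X U L] x).NeBot := mem_closure_iff_nhdsWithin_neBot.1 hx
      have hcf : Filter.Tendsto (fun y => ‖f y‖) (𝓝[holHullIn N X U L] x) (𝓝 ‖f x‖) :=
        (((hf x hxU).continuousAt).norm).tendsto.mono_left nhdsWithin_le_nhds
      exact le_of_tendsto hcf (eventually_nhdsWithin_of_forall fun y hy =>
        ((mem_holHullIn N X).1 hy).2 f hf)
    exact hCcompact.of_isClosed_subset hHullClosed hHullC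
  · intro x hxU y hyU hxy
    obtain ⟨f, hf, hne⟩ := hStein.2.2.1 x (mem_univ x) y (mem_univ y) hxy
    exact ⟨f, holo_mono N X hf, hne⟩
  · intro x hxU
    obtain ⟨f, hf, W, hW, _, hinj⟩ := hStein.2.2.2 x (mem_univ x)
    exact ⟨f, fun i => holo_mono N X (hf i), W ∩ U,
      Filter.inter_mem hW (hUopen.mem_nhds hxU), inter_subset_right,
      hinj.mono inter_subset_left⟩

lemma exists_separating [T2Space X] (hStein : IsSteinOpen N X univ) {K : Set X}
    (hK : IsCompact K) (hconv : holHullIn N X univ K = K) {p : X} (hp : p ∉ K) :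
    ∃ g : X → ℂ, HolomorphicOnSet N X univ g ∧ 1 < ‖g p‖ ∧ ∀ y ∈ K, ‖g y‖ < 1 := by
  have hp' : p ∉ holHullIn N X univ K := by rw [hconv]; exact hp
  rw [mem_holHullIn] at hp'
  push_neg at hp'
  obtain ⟨f, hf, hlt⟩ := hp' (mem_univ p)
  set s := sSup ((fun y => ‖f y‖) '' K) with hs
  have hs0 : 0 ≤ s := by
    rcases K.eq_empty_or_nonempty with h | ⟨y, hy⟩
    · simp [hs, h, Real.sSup_empty]
    · exact le_trans (norm_nonneg (f y))
        (le_csSup ((hK.image ((holo_continuous N X hf).norm)).bddAbove) ⟨y, hy, rfl⟩)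
  set c : ℝ := (s + ‖f p‖) / 2 with hc
  have hsc : s < c := by rw [hc]; linarith
  have hcf : c < ‖f p‖ := by rw [hc]; linarith
  have hc0 : 0 < c := lt_of_le_of_lt hs0 hsc
  have hnorm : ∀ y, ‖((c : ℂ)⁻¹ • f) y‖ = ‖f y‖ / c := by
    intro y
    simp [norm_smul, abs_of_pos hc0, div_eq_inv_mul]
  refine ⟨(c : ℂ)⁻¹ • f, fun x _ => (hf x (mem_univ x)).const_smul _, ?_, ?_⟩
  · rw [hnorm p]
    exact (one_lt_div hc0).2 hcf
  · intro y hy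
    rw [hnorm y]
    refine (div_lt_one hc0).2 (lt_of_le_of_lt ?_ hsc)
    exact le_csSup ((hK.image ((holo_continuous N X hf).norm)).bddAbove) ⟨y, hy, rfl⟩
/-- **Rossi's lemma.**  Let `X` be a Stein manifold and `K ⊆ X` a compact set that is
`𝒪(X)`-convex.  Then `K` is the intersection of a decreasing sequence of open Stein
submanifolds of `X`. -/
theorem stein_neighborhood_basis_of_OX_convex
    {N : ℕ} {X : Type} [TopologicalSpace X] [T2Space X]
    [SecondCountableTopology X] [ChartedSpace (Fin N → ℂ) X]
    [IsManifold 𝓘(ℂ, Fin N → ℂ) (⊤ : ℕ∞) X]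
    (hStein : IsSteinOpen N X univ)
    (K : Set X) (hK : IsCompact K)
    (hconv : holHullIn N X univ K = K) :
    ∃ U : ℕ → Set X, (∀ k, IsSteinOpen N X (U k)) ∧ Antitone U ∧ K = ⋂ k, U k := by
  classical
  haveI : LocallyCompactSpace X := ChartedSpace.locallyCompactSpace (Fin N → ℂ) X
  haveI : TopologicalSpace.MetrizableSpace X :=
    TopologicalSpace.metrizableSpace_of_t3_secondCountable X
  letI := TopologicalSpace.metrizableSpaceMetric X
  obtain ⟨L0, hL0c, hKL0⟩ := exists_compact_superset hK
  set L : ℕ → Set X := fun k => L0 ∩ Metric.cthickening (1 / ((k : ℝ) + 1)) K with hL_def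
  have hLc : ∀ k, IsCompact (L k) := fun k => hL0c.inter_right Metric.isClosed_cthickening
  have hKintL : ∀ k, K ⊆ interior (L k) := by
    intro k
    have hpos : 0 < 1 / ((k : ℝ) + 1) := by positivity
    rw [hL_def]
    rw [interior_inter]
    refine subset_inter hKL0 ?_
    refine (Metric.self_subset_thickening hpos K).trans ?_
    exact interior_maximal (Metric.thickening_subset_cthickening _ _) Metric.isOpen_thickening
  have hLK : (⋂ k, L k) ⊆ K := by
    intro x hx
    have h1 : ∀ k : ℕ, EMetric.infEdist x K ≤ ENNReal.ofReal (1 / ((k : ℝ) + 1)) :=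
      fun k => Metric.mem_cthickening_iff.1 (mem_iInter.1 hx k).2
    have h0 : EMetric.infEdist x K ≤ 0 := by
      have h2 : Filter.Tendsto (fun k : ℕ => ENNReal.ofReal (1 / ((k : ℝ) + 1)))
          Filter.atTop (𝓝 0) := by
        have h3 := ENNReal.tendsto_ofReal tendsto_one_div_add_atTop_nhds_zero_nat
        simpa using h3
      exact ge_of_tendsto h2 (Filter.Eventually.of_forall h1)
    have h3 : x ∈ closure K :=
      EMetric.mem_closure_iff_infEdist_zero.2 (le_antisymm h0 (zero_le))
    rwa [hK.isClosed.closure_eq] at h3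
  -- separating functions
  have hgood : ∀ p : X, ∃ g : X → ℂ, p ∉ K →
      HolomorphicOnSet N X univ g ∧ 1 < ‖g p‖ ∧ ∀ y ∈ K, ‖g y‖ < 1 := by
    intro p
    by_cases hp : p ∈ K
    · exact ⟨0, fun h => absurd hp h⟩
    · obtain ⟨g, h⟩ := exists_separating N X hStein hK hconv hp
      exact ⟨g, fun _ => h⟩
  choose gg hgg using hgood
  have hpnK : ∀ k, ∀ p ∈ L k \ interior (L k), p ∉ K :=
    fun k p hp hpK => hp.2 (hKintL k hpK)
  -- finite covers of the boundaries
  have hDcov : ∀ k, ∃ T ⊆ L k \ interior (L k), T.Finite ∧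
      L k \ interior (L k) ⊆ ⋃ p ∈ T, {y | 1 < ‖gg p y‖} := by
    intro k
    have hD : IsCompact (L k \ interior (L k)) := (hLc k).diff isOpen_interior
    refine hD.elim_finite_subcover_image (fun p hp => ?_) (fun p hp => ?_)
    · exact isOpen_lt continuous_const (holo_continuous N X ((hgg p (hpnK k p hp)).1)).norm
    · exact mem_iUnion₂.2 ⟨p, hp, (hgg p (hpnK k p hp)).2.1⟩
  choose T hTsub hTfin hTcov using hDcov
  set Tc : ℕ → Set X := fun k => ⋃ j ∈ Finset.range (k + 1), T j with hTc_def
  have hTcnK : ∀ k, ∀ p ∈ Tc k, p ∉ K := by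
    intro k p hp
    obtain ⟨j, _, hpj⟩ := mem_iUnion₂.1 hp
    exact hpnK j p (hTsub j hpj)
  have hTcfin : ∀ k, (Tc k).Finite :=
    fun k => Set.Finite.biUnion (Finset.range (k + 1)).finite_toSet (fun j _ => hTfin j)
  set M : ℕ → Set X := fun k => ⋂ j ∈ Finset.range (k + 1), L j with hM_def
  set O : ℕ → Set X := fun k => ⋂ j ∈ Finset.range (k + 1), interior (L j) with hO_def
  have hMc : ∀ k, IsCompact (M k) := by
    intro k
    have hcl : IsClosed (M k) := isClosed_biInter fun j _ => (hLc j).isClosed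
    refine (hLc 0).of_isClosed_subset hcl ?_
    exact biInter_subset_of_mem (Finset.mem_range.2 (Nat.succ_pos k))
  have hOopen : ∀ k, IsOpen (O k) := fun k => isOpen_biInter_finset fun j _ => isOpen_interior
  have hOM : ∀ k, O k ⊆ M k := fun k => iInter₂_mono fun j _ => interior_subset
  set U : ℕ → Set X := fun k => {x ∈ M k | ∀ g ∈ gg '' Tc k, ‖g x‖ < 1} with hU_def
  have hGhol : ∀ k, ∀ g ∈ gg '' Tc k, HolomorphicOnSet N X univ g := by
    rintro k g ⟨p, hp, rfl⟩
    exact (hgg p (hTcnK k p hp)).1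
  have hcov : ∀ k, ∀ x ∈ M k \ O k, ∃ g ∈ gg '' Tc k, 1 < ‖g x‖ := by
    intro k x hx
    obtain ⟨j, hj, hxj⟩ : ∃ j ∈ Finset.range (k + 1), x ∉ interior (L j) := by
      by_contra h
      push_neg at h
      exact hx.2 (mem_iInter₂.2 h)
    have hxLj : x ∈ L j := mem_iInter₂.1 hx.1 j hj
    obtain ⟨p, hpT, hpx⟩ := mem_iUnion₂.1 (hTcov j ⟨hxLj, hxj⟩)
    exact ⟨gg p, ⟨p, mem_iUnion₂.2 ⟨j, hj, hpT⟩, rfl⟩, hpx⟩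
  refine ⟨U, fun k => ?_, ?_, ?_⟩
  · exact isSteinOpen_polyhedron N X hStein (hMc k) (hOopen k) (hOM k)
      ((hTcfin k).image gg) (hGhol k) (hcov k)
  · -- Antitone
    intro k l hkl x hx
    have hrange : Finset.range (k + 1) ⊆ Finset.range (l + 1) :=
      Finset.range_subset_range.2 (by omega)
    refine ⟨mem_iInter₂.2 fun j hj => mem_iInter₂.1 hx.1 j (hrange hj), ?_⟩
    rintro g ⟨p, hp, rfl⟩
    refine hx.2 (gg p) ⟨p, ?_, rfl⟩
    obtain ⟨j, hj, hpj⟩ := mem_iUnion₂.1 hp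
    exact mem_iUnion₂.2 ⟨j, hrange hj, hpj⟩
  · -- K = ⋂ U k
    apply Subset.antisymm
    · intro y hy
      refine mem_iInter.2 fun k => ⟨mem_iInter₂.2 fun j _ => interior_subset (hKintL j hy), ?_⟩
      rintro g ⟨p, hp, rfl⟩
      exact (hgg p (hTcnK k p hp)).2.2 y hy
    · intro x hx
      refine hLK (mem_iInter.2 fun k => ?_)
      exact mem_iInter₂.1 (mem_iInter.1 hx k).1 k (Finset.self_mem_range_succ k)

end
end

section
/- Let ρ be a real-valued C^2 function on an open set in ℂ^N with dρ ≠ 0 on {ρ = 0}. Then the hypersurface {ρ = 0} is Levi-flat if and only if the complex bordered Hessian matrix [[ρ, ρ_z],[ρ_{z̄}, ρ_{zz̄}]] (the (N+1)×(N+1) matrix with entries ρ, the row vector of ρ_{z_j}, the column vector of ρ_{z̄_k}, and the complex Hessian ρ_{z_j z̄_k}) has rank equal to 2 at every point of {ρ = 0}. -/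
open Set

noncomputable section

variable {N : ℕ}

/-- The Wirtinger derivative `∂g/∂z_j` for `g : ℂ^N → ℂ` (via the real derivative). -/
def wz (g : (Fin N → ℂ) → ℂ) (j : Fin N) (x : Fin N → ℂ) : ℂ :=
  (fderiv ℝ g x (Pi.single j 1) - Complex.I * fderiv ℝ g x (Pi.single j Complex.I)) / 2

/-- The conjugate Wirtinger derivative `∂g/∂z̄_j`. -/
def wzbar (g : (Fin N → ℂ) → ℂ) (j : Fin N) (x : Fin N → ℂ) : ℂ :=
  (fderiv ℝ g x (Pi.single j 1) + Complex.I * fderiv ℝ g x (Pi.single j Complex.I)) / 2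

/-- `ρ_{z_j}` for a real-valued `ρ`. -/
def rhoZ (ρ : (Fin N → ℂ) → ℝ) (j : Fin N) (x : Fin N → ℂ) : ℂ :=
  wz (fun y => (ρ y : ℂ)) j x

/-- `ρ_{z̄_j}` for a real-valued `ρ`. -/
def rhoZbar (ρ : (Fin N → ℂ) → ℝ) (j : Fin N) (x : Fin N → ℂ) : ℂ :=
  wzbar (fun y => (ρ y : ℂ)) j x

/-- The complex Hessian entry `ρ_{z_j z̄_k}`. -/
def rhoZZbar (ρ : (Fin N → ℂ) → ℝ) (j k : Fin N) (x : Fin N → ℂ) : ℂ :=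
  wzbar (fun y => rhoZ ρ j y) k x

/-- The complex bordered Hessian `[[ρ, ρ_z], [ρ_{z̄}, ρ_{z z̄}]]`, an
`(N+1) × (N+1)` matrix. -/
def borderedHessian (ρ : (Fin N → ℂ) → ℝ) (x : Fin N → ℂ) :
    Matrix (Unit ⊕ Fin N) (Unit ⊕ Fin N) ℂ :=
  Matrix.fromBlocks (fun _ _ => (ρ x : ℂ)) (fun _ j => rhoZ ρ j x)
    (fun k _ => rhoZbar ρ k x) (fun k j => rhoZZbar ρ j k x)

open Matrix
lemma fderiv_ofReal_comp {ρ : (Fin N → ℂ) → ℝ} {x : Fin N → ℂ} (h : DifferentiableAt ℝ ρ x) :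
    fderiv ℝ (fun y => (ρ y : ℂ)) x = Complex.ofRealCLM.comp (fderiv ℝ ρ x) :=
  (Complex.ofRealCLM.hasFDerivAt.comp x h.hasFDerivAt).fderiv

lemma rhoZbar_eq_conj {ρ : (Fin N → ℂ) → ℝ} {x : Fin N → ℂ} (h : DifferentiableAt ℝ ρ x)
    (j : Fin N) : rhoZbar ρ j x = starRingEnd ℂ (rhoZ ρ j x) := by
  unfold rhoZbar rhoZ wzbar wz
  rw [fderiv_ofReal_comp h]
  simp only [ContinuousLinearMap.comp_apply, Complex.ofRealCLM_apply, map_div₀, _root_.map_sub,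
    _root_.map_mul, Complex.conj_ofReal, Complex.conj_I, map_ofNat]
  ring

lemma exists_rhoZ_ne_zero {ρ : (Fin N → ℂ) → ℝ} {x : Fin N → ℂ} (h : DifferentiableAt ℝ ρ x)
    (hd : fderiv ℝ ρ x ≠ 0) : ∃ j, rhoZ ρ j x ≠ 0 := by
  by_contra hc
  push_neg at hc
  apply hd
  have hz : ∀ j, ((fderiv ℝ ρ x (Pi.single j 1) : ℂ) -
      Complex.I * (fderiv ℝ ρ x (Pi.single j Complex.I) : ℂ)) / 2 = 0 := by
    intro j
    have := hc j
    unfold rhoZ wz at this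
    rw [fderiv_ofReal_comp h] at this
    simpa using this
  have h1 : ∀ j, fderiv ℝ ρ x (Pi.single j 1) = 0 := by
    intro j
    have := hz j
    rw [div_eq_zero_iff] at this
    have h2 := this.resolve_right (by norm_num)
    have := congrArg Complex.re h2
    simpa using this
  have h2 : ∀ j, fderiv ℝ ρ x (Pi.single j Complex.I) = 0 := by
    intro j
    have := hz j
    rw [div_eq_zero_iff] at this
    have h2 := this.resolve_right (by norm_num)
    have := congrArg Complex.im h2
    simpa using this
  ext v
  have hv : v = ∑ j, Pi.single j (v j) := (Finset.univ_sum_single v).symm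
  rw [hv]
  rw [_root_.map_sum]
  rw [Finset.sum_eq_zero]
  · simp
  intro j _
  have hvj : v j = (v j).re • (1:ℂ) + (v j).im • Complex.I := by
    simp [Complex.real_smul, Complex.re_add_im]
  have : Pi.single j (v j) = (v j).re • (Pi.single j 1 : Fin N → ℂ) + (v j).im • (Pi.single j Complex.I : Fin N → ℂ) := by
    rw [← Pi.single_smul, ← Pi.single_smul, ← Pi.single_add, ← hvj]
  rw [this, _root_.map_add, _root_.map_smul, _root_.map_smul, h1, h2]
  simp

lemma span_cols_of_pair {n : Type*} [Fintype n] [DecidableEq n]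
    (M : Matrix n n ℂ) (j0 j1 : n)
    (hspan : ∀ j, ∃ b c : ℂ, Mᵀ j = b • Mᵀ j0 + c • Mᵀ j1) :
    Submodule.span ℂ (Set.range Mᵀ) = Submodule.span ℂ {Mᵀ j0, Mᵀ j1} := by
  apply le_antisymm
  · rw [Submodule.span_le]
    rintro - ⟨j, rfl⟩
    obtain ⟨b, c, hbc⟩ := hspan j
    rw [hbc]
    exact Submodule.add_mem _ (Submodule.smul_mem _ _ (Submodule.subset_span (by simp)))
      (Submodule.smul_mem _ _ (Submodule.subset_span (by simp)))
  · apply Submodule.span_mono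
    rintro y (rfl | rfl) <;> exact ⟨_, rfl⟩

lemma finrank_span_pair_two {V : Type*} [AddCommGroup V] [Module ℂ V] {u v : V}
    (h : LinearIndependent ℂ ![u, v]) :
    Module.finrank ℂ (Submodule.span ℂ ({u, v} : Set V)) = 2 := by
  have : ({u, v} : Set V) = Set.range ![u, v] := by
    ext y
    simp [Fin.exists_fin_two, or_comm, eq_comm]
  rw [this, finrank_span_eq_card h]
  simp

lemma rank_eq_two_of_pair {n : Type*} [Fintype n] [DecidableEq n]
    (M : Matrix n n ℂ) (j0 j1 : n)
    (hind : LinearIndependent ℂ ![Mᵀ j0, Mᵀ j1])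
    (hspan : ∀ j, ∃ b c : ℂ, Mᵀ j = b • Mᵀ j0 + c • Mᵀ j1) :
    M.rank = 2 := by
  rw [Matrix.rank, Matrix.range_mulVecLin]
  change Module.finrank ℂ (Submodule.span ℂ (Set.range Mᵀ)) = 2
  rw [span_cols_of_pair M j0 j1 hspan,
    finrank_span_pair_two hind]

lemma cols_mem_of_rank_two {n : Type*} [Fintype n] [DecidableEq n]
    (M : Matrix n n ℂ) (j0 j1 : n)
    (hind : LinearIndependent ℂ ![Mᵀ j0, Mᵀ j1])
    (hr : M.rank = 2) :
    ∀ j, ∃ b c : ℂ, Mᵀ j = b • Mᵀ j0 + c • Mᵀ j1 := by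
  have hle : Submodule.span ℂ ({Mᵀ j0, Mᵀ j1} : Set (n → ℂ)) ≤
      Submodule.span ℂ (Set.range Mᵀ) := by
    apply Submodule.span_mono
    rintro y (rfl | rfl) <;> exact ⟨_, rfl⟩
  have heq : Submodule.span ℂ ({Mᵀ j0, Mᵀ j1} : Set (n → ℂ)) =
      Submodule.span ℂ (Set.range Mᵀ) := by
    apply Submodule.eq_of_le_of_finrank_le hle
    rw [Matrix.rank, Matrix.range_mulVecLin] at hr
    change Module.finrank ℂ (Submodule.span ℂ (Set.range Mᵀ)) = 2 at hr
    rw [hr, finrank_span_pair_two hind]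
  intro j
  have : Mᵀ j ∈ Submodule.span ℂ ({Mᵀ j0, Mᵀ j1} : Set (n → ℂ)) := by
    rw [heq]; exact Submodule.subset_span ⟨j, rfl⟩
  obtain ⟨b, c, hbc⟩ := Submodule.mem_span_pair.mp this
  exact ⟨b, c, hbc.symm⟩

private def sqq (G : Matrix (Fin N) (Fin N) ℂ) (u v : Fin N → ℂ) : ℂ :=
  ∑ j, ∑ k, G j k * u j * starRingEnd ℂ (v k)

lemma sq_expand (G : Matrix (Fin N) (Fin N) ℂ) (c : ℂ) (u v : Fin N → ℂ) :
    sqq G (u + c • v) (u + c • v)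
      = sqq G u u + starRingEnd ℂ c * sqq G u v + c * sqq G v u
        + (c * starRingEnd ℂ c) * sqq G v v := by
  simp only [sqq, Finset.mul_sum]
  rw [← Finset.sum_add_distrib, ← Finset.sum_add_distrib, ← Finset.sum_add_distrib]
  refine Finset.sum_congr rfl fun j _ => ?_
  rw [← Finset.sum_add_distrib, ← Finset.sum_add_distrib, ← Finset.sum_add_distrib]
  refine Finset.sum_congr rfl fun k _ => ?_
  simp only [Pi.add_apply, Pi.smul_apply, smul_eq_mul, map_add, _root_.map_mul]
  ring

lemma sq_vanish (G : Matrix (Fin N) (Fin N) ℂ) (a : Fin N → ℂ)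
    (hQ : ∀ w, (∑ j, a j * w j) = 0 → sqq G w w = 0)
    {u v : Fin N → ℂ} (hu : (∑ j, a j * u j) = 0) (hv : (∑ j, a j * v j) = 0) :
    sqq G u v = 0 := by
  have hT : ∀ c : ℂ, (∑ j, a j * (u + c • v) j) = 0 := by
    intro c
    simp only [Pi.add_apply, Pi.smul_apply, smul_eq_mul, mul_add, Finset.sum_add_distrib]
    rw [hu]
    have : ∑ j, a j * (c * v j) = c * ∑ j, a j * v j := by
      rw [Finset.mul_sum]; exact Finset.sum_congr rfl fun j _ => by ring
    rw [this, hv, mul_zero, add_zero]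
  have h1 := hQ (u + (1:ℂ) • v) (hT 1)
  have h2 := hQ (u + Complex.I • v) (hT Complex.I)
  rw [sq_expand, hQ u hu, hQ v hv] at h1 h2
  simp only [RingHom.map_one, one_mul, mul_one, zero_add, add_zero, mul_zero,
    Complex.conj_I] at h1 h2
  have h3 : sqq G v u = sqq G u v := by
    have h4 : Complex.I * (sqq G v u - sqq G u v) = 0 := by linear_combination h2
    rcases mul_eq_zero.mp h4 with h | h
    · exact absurd h Complex.I_ne_zero
    · exact sub_eq_zero.mp h
  rw [h3] at h1
  linear_combination h1 / 2

lemma sum_comb (f : Fin N → ℂ) (p j0 : Fin N) (r : ℂ) :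
    ∑ j, f j * ((Pi.single p 1 : Fin N → ℂ) - r • (Pi.single j0 1 : Fin N → ℂ)) j = f p - r * f j0 := by
  simp only [Pi.sub_apply, Pi.smul_apply, Pi.single_apply, smul_eq_mul, mul_sub,
    Finset.sum_sub_distrib, mul_ite, mul_one, mul_zero]
  rw [Finset.sum_ite_eq' Finset.univ p f]
  simp [Finset.sum_ite_eq' Finset.univ j0 (fun j => f j * r)]
  ring

lemma sum_conj_comb (f : Fin N → ℂ) (k j0 : Fin N) (r : ℂ) :
    ∑ m, f m * starRingEnd ℂ (((Pi.single k 1 : Fin N → ℂ) - r • (Pi.single j0 1 : Fin N → ℂ)) m)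
      = f k - starRingEnd ℂ r * f j0 := by
  have : ∀ m, starRingEnd ℂ (((Pi.single k 1 : Fin N → ℂ) - r • (Pi.single j0 1 : Fin N → ℂ)) m)
      = ((Pi.single k 1 : Fin N → ℂ) - starRingEnd ℂ r • (Pi.single j0 1 : Fin N → ℂ)) m := by
    intro m
    simp only [Pi.sub_apply, Pi.smul_apply, Pi.single_apply, smul_eq_mul, map_sub, _root_.map_mul]
    simp [apply_ite (starRingEnd ℂ)]
  simp_rw [this]
  exact sum_comb f k j0 _

lemma main_pointwise (a : Fin N → ℂ) (G : Matrix (Fin N) (Fin N) ℂ) (j0 : Fin N)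
    (hj0 : a j0 ≠ 0) (M : Matrix (Unit ⊕ Fin N) (Unit ⊕ Fin N) ℂ)
    (e1 : M (Sum.inl ()) (Sum.inl ()) = 0)
    (e2 : ∀ k, M (Sum.inr k) (Sum.inl ()) = starRingEnd ℂ (a k))
    (e3 : ∀ p, M (Sum.inl ()) (Sum.inr p) = a p)
    (e4 : ∀ p k, M (Sum.inr k) (Sum.inr p) = G p k) :
    (∀ w : Fin N → ℂ, (∑ j, a j * w j) = 0 → sqq G w w = 0) ↔ M.rank = 2 := by
  have hcj0 : starRingEnd ℂ (a j0) ≠ 0 := by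
    rw [starRingEnd_apply]
    exact star_ne_zero.mpr hj0
  have hind : LinearIndependent ℂ ![Mᵀ (Sum.inl ()), Mᵀ (Sum.inr j0)] := by
    rw [LinearIndependent.pair_iff]
    intro s t hst
    have h1 := congrFun hst (Sum.inr j0)
    have h2 := congrFun hst (Sum.inl ())
    simp only [Pi.add_apply, Pi.smul_apply, smul_eq_mul, Pi.zero_apply, Matrix.transpose_apply,
      e1, e2, e3, e4] at h1 h2
    -- h2 : s * M (inl) (inl) + t * M (inl) (inr j0) = s * 0 + t * a j0 = 0
    have ht : t = 0 := by
      have h3 : t * a j0 = 0 := by linear_combination h2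
      exact (mul_eq_zero.mp h3).resolve_right hj0
    rw [ht] at h1
    have hs : s = 0 := by
      have h3 : s * starRingEnd ℂ (a j0) = 0 := by linear_combination h1
      exact (mul_eq_zero.mp h3).resolve_right hcj0
    exact ⟨hs, ht⟩
  constructor
  · intro hQ
    apply rank_eq_two_of_pair M (Sum.inl ()) (Sum.inr j0) hind
    intro j
    match j with
    | Sum.inl u =>
      refine ⟨1, 0, ?_⟩
      funext i
      simp
    | Sum.inr p =>
      -- tangent test vectors
      have hT : ∀ q, (∑ j, a j *
          ((Pi.single q 1 : Fin N → ℂ) - (a q / a j0) • (Pi.single j0 1 : Fin N → ℂ)) j) = 0 := by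
        intro q
        rw [sum_comb]
        field_simp
        ring
      have key : ∀ k, G p k - (a p / a j0) * G j0 k
          = starRingEnd ℂ (a k / a j0) * (G p j0 - (a p / a j0) * G j0 j0) := by
        intro k
        have h := sq_vanish G a hQ (hT p) (hT k)
        unfold sqq at h
        rw [Finset.sum_comm] at h
        have hrw : ∀ m : Fin N, (∑ j, G j m *
            ((Pi.single p 1 : Fin N → ℂ) - (a p / a j0) • (Pi.single j0 1 : Fin N → ℂ)) j *
            starRingEnd ℂ (((Pi.single k 1 : Fin N → ℂ) -
              (a k / a j0) • (Pi.single j0 1 : Fin N → ℂ)) m))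
            = (G p m - (a p / a j0) * G j0 m) *
              starRingEnd ℂ (((Pi.single k 1 : Fin N → ℂ) -
                (a k / a j0) • (Pi.single j0 1 : Fin N → ℂ)) m) := by
          intro m
          rw [← Finset.sum_mul, sum_comb (fun j => G j m) p j0 (a p / a j0)]
        simp only [hrw] at h
        rw [sum_conj_comb (fun m => G p m - (a p / a j0) * G j0 m) k j0 (a k / a j0)] at h
        linear_combination h
      refine ⟨(G p j0 - (a p / a j0) * G j0 j0) / starRingEnd ℂ (a j0), a p / a j0, ?_⟩
      funext i
      match i with
      | Sum.inl u =>
        simp only [Matrix.transpose_apply, Pi.add_apply, Pi.smul_apply, smul_eq_mul, e1, e3]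
        field_simp
        ring
      | Sum.inr k =>
        simp only [Matrix.transpose_apply, Pi.add_apply, Pi.smul_apply, smul_eq_mul, e2, e4]
        have hk := key k
        rw [map_div₀] at hk
        field_simp at hk ⊢
        linear_combination hk
  · intro hr2 w hw
    have hcols := cols_mem_of_rank_two M (Sum.inl ()) (Sum.inr j0) hind hr2
    choose b c hbc using fun p => hcols (Sum.inr p)
    have hcp : ∀ p, a p = c p * a j0 := by
      intro p
      have h := congrFun (hbc p) (Sum.inl ())
      simp only [Matrix.transpose_apply, Pi.add_apply, Pi.smul_apply, smul_eq_mul, e1, e3] at h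
      linear_combination h
    have hEntry : ∀ p k, G p k = b p * starRingEnd ℂ (a k) + c p * G j0 k := by
      intro p k
      have h := congrFun (hbc p) (Sum.inr k)
      simpa only [Matrix.transpose_apply, Pi.add_apply, Pi.smul_apply, smul_eq_mul, e2, e4] using h
    have hconjsum : (∑ k, starRingEnd ℂ (a k) * starRingEnd ℂ (w k)) = 0 := by
      have : (∑ k, starRingEnd ℂ (a k) * starRingEnd ℂ (w k))
          = starRingEnd ℂ (∑ k, a k * w k) := by
        rw [_root_.map_sum]
        exact Finset.sum_congr rfl fun k _ => (by rw [_root_.map_mul])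
      rw [this, hw, map_zero]
    have hcw : (∑ p, c p * w p) = 0 := by
      have h1 : (∑ p, c p * w p) * a j0 = 0 := by
        rw [Finset.sum_mul]
        have : ∀ p ∈ Finset.univ, c p * w p * a j0 = a p * w p := by
          intro p _
          rw [hcp p]; ring
        rw [Finset.sum_congr rfl this, hw]
      exact (mul_eq_zero.mp h1).resolve_right hj0
    unfold sqq
    calc (∑ j, ∑ k, G j k * w j * starRingEnd ℂ (w k))
        = ∑ p, ∑ k, (b p * w p * (starRingEnd ℂ (a k) * starRingEnd ℂ (w k))
            + (c p * w p) * (G j0 k * starRingEnd ℂ (w k))) := by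
          refine Finset.sum_congr rfl fun p _ => Finset.sum_congr rfl fun k _ => ?_
          rw [hEntry p k]; ring
      _ = ∑ p, ((b p * w p) * (∑ k, starRingEnd ℂ (a k) * starRingEnd ℂ (w k))
            + (c p * w p) * (∑ k, G j0 k * starRingEnd ℂ (w k))) := by
          refine Finset.sum_congr rfl fun p _ => ?_
          rw [Finset.sum_add_distrib, Finset.mul_sum, Finset.mul_sum]
      _ = ∑ p, (c p * w p) * (∑ k, G j0 k * starRingEnd ℂ (w k)) := by
          refine Finset.sum_congr rfl fun p _ => ?_
          rw [hconjsum, mul_zero, zero_add]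
      _ = (∑ p, c p * w p) * (∑ k, G j0 k * starRingEnd ℂ (w k)) := by
          rw [Finset.sum_mul]
      _ = 0 := by rw [hcw, zero_mul]

/-- For a `C²` real-valued `ρ` on an open set `U ⊆ ℂ^N` with `dρ ≠ 0` on `{ρ = 0}`, the
hypersurface `{ρ = 0}` is Levi-flat (the Levi form vanishes on complex tangent vectors)
iff the complex bordered Hessian has rank `2` at every point of `{ρ = 0}`. -/
theorem leviFlat_iff_borderedHessian_rank_two (U : Set (Fin N → ℂ)) (hU : IsOpen U)
    (ρ : (Fin N → ℂ) → ℝ) (hρ : ContDiffOn ℝ 2 ρ U)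
    (hdρ : ∀ x ∈ U, ρ x = 0 → fderiv ℝ ρ x ≠ 0) :
    (∀ x ∈ U, ρ x = 0 → ∀ w : Fin N → ℂ,
        (∑ j, rhoZ ρ j x * w j) = 0 →
        (∑ j, ∑ k, rhoZZbar ρ j k x * w j * starRingEnd ℂ (w k)) = 0) ↔
      (∀ x ∈ U, ρ x = 0 → (borderedHessian ρ x).rank = 2) := by
  refine forall_congr' fun x => forall_congr' fun hx => forall_congr' fun hx0 => ?_
  have hdiff : DifferentiableAt ℝ ρ x :=
    (hρ.contDiffAt (hU.mem_nhds hx)).differentiableAt two_ne_zero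
  obtain ⟨j0, hj0⟩ := exists_rhoZ_ne_zero hdiff (hdρ x hx hx0)
  have := main_pointwise (fun j => rhoZ ρ j x) (fun j k => rhoZZbar ρ j k x) j0 hj0
    (borderedHessian ρ x)
    (by simp [borderedHessian, hx0]; rfl)
    (fun k => by simp [borderedHessian]; exact rhoZbar_eq_conj hdiff k)
    (fun p => by simp [borderedHessian]; rfl)
    (fun p k => by simp [borderedHessian]; rfl)
  exact this

end
end
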